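/- Let W ∈ ℝ^{p×p} have nonnegative entries. Then tr(exp(W)) ≥ p, with equality if and only if the directed graph with edge i → j whenever W_{ij} > 0 contains no directed cycle. -/

import Mathlib

open Matrix

section aux

variable {p : ℕ} (W : Matrix (Fin p) (Fin p) ℝ)

lemma pow_entry_nonneg (hW : ∀ i j, 0 ≤ W i j) :
    ∀ (n : ℕ) (i j : Fin p), 0 ≤ (W ^ n) i j := by
  intro n
  induction n with
  | zero =>
    intro i j
    simp [pow_zero, Matrix.one_apply]
    split <;> norm_num
  | succ n ih =>
    intro i j
    rw [pow_succ, Matrix.mul_apply]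
    exact Finset.sum_nonneg fun k _ => mul_nonneg (ih i k) (hW k j)

lemma pos_to_transGen (hW : ∀ i j, 0 ≤ W i j) :
    ∀ (n : ℕ) (i j : Fin p), 0 < (W ^ (n + 1)) i j →
      Relation.TransGen (fun a b : Fin p => 0 < W a b) i j := by
  intro n
  induction n with
  | zero =>
    intro i j h
    rw [pow_one] at h
    exact Relation.TransGen.single h
  | succ n ih =>
    intro i j h
    rw [pow_succ, Matrix.mul_apply] at h
    obtain ⟨k, -, hk⟩ := Finset.exists_lt_of_sum_lt
      (show ∑ _k : Fin p, (0:ℝ) < ∑ k, (W ^ (n + 1)) i k * W k j by simpa using h)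
    have hk' : 0 < (W ^ (n + 1)) i k * W k j := by simpa using hk
    have h1 : 0 < (W ^ (n + 1)) i k :=
      lt_of_le_of_ne (pow_entry_nonneg W hW _ i k) (by
        intro heq
        rw [← heq] at hk'
        simp at hk')
    have h2 : 0 < W k j :=
      lt_of_le_of_ne (hW k j) (by
        intro heq
        rw [← heq] at hk'
        simp at hk')
    exact (ih i k h1).tail h2

lemma transGen_to_pos (hW : ∀ i j, 0 ≤ W i j) {i j : Fin p}
    (h : Relation.TransGen (fun a b : Fin p => 0 < W a b) i j) :
    ∃ n : ℕ, 0 < (W ^ (n + 1)) i j := by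
  induction h with
  | single hb => exact ⟨0, by simpa using hb⟩
  | @tail b c hab hbc ih =>
    obtain ⟨n, hn⟩ := ih
    refine ⟨n + 1, ?_⟩
    rw [pow_succ, Matrix.mul_apply]
    have : 0 < (W ^ (n + 1)) i b * W b c := mul_pos hn hbc
    calc (0 : ℝ) < (W ^ (n + 1)) i b * W b c := this
      _ ≤ ∑ k, (W ^ (n + 1)) i k * W k c :=
        Finset.single_le_sum
          (fun k _ => mul_nonneg (pow_entry_nonneg W hW _ i k) (hW k c))
          (Finset.mem_univ b)

end aux

/-- Let `W ∈ ℝ^{p×p}` have nonnegative entries.  Then `tr(exp W) ≥ p`, with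
equality iff the directed graph with edge `i → j` whenever `W i j > 0` has no directed
cycle. -/
theorem stmt4 (p : ℕ) (W : Matrix (Fin p) (Fin p) ℝ)
    (hW : ∀ i j, 0 ≤ W i j) :
    (p : ℝ) ≤ (NormedSpace.exp W).trace ∧
    ((NormedSpace.exp W).trace = p ↔
      ∀ i : Fin p, ¬ Relation.TransGen (fun i j : Fin p => 0 < W i j) i i) := by
  letI : SeminormedRing (Matrix (Fin p) (Fin p) ℝ) := Matrix.linftyOpSemiNormedRing
  letI : NormedRing (Matrix (Fin p) (Fin p) ℝ) := Matrix.linftyOpNormedRing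
  letI : NormedAlgebra ℝ (Matrix (Fin p) (Fin p) ℝ) := Matrix.linftyOpNormedAlgebra
  -- the series for exp
  have hsum : HasSum (fun n : ℕ => ((n.factorial : ℝ)⁻¹) • W ^ n) (NormedSpace.exp W) :=
    NormedSpace.exp_series_hasSum_exp' W
  -- map by trace
  have htr : HasSum (fun n : ℕ => ((n.factorial : ℝ)⁻¹) * (W ^ n).trace)
      (NormedSpace.exp W).trace := by
    have := hsum.map (Matrix.traceAddMonoidHom (Fin p) ℝ)
      (continuous_id.matrix_trace)
    simpa [Function.comp_def, Matrix.traceAddMonoidHom, Matrix.trace_smul, smul_eq_mul] using this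
  set f : ℕ → ℝ := fun n => ((n.factorial : ℝ)⁻¹) * (W ^ n).trace with hf
  have hf0 : f 0 = p := by
    simp [hf, Matrix.trace_one]
  have hfnn : ∀ n, 0 ≤ f n := fun n =>
    mul_nonneg (by positivity) (Finset.sum_nonneg fun i _ => pow_entry_nonneg W hW n i i)
  have hle : (p : ℝ) ≤ (NormedSpace.exp W).trace := by
    have := le_hasSum htr 0 (fun n _ => hfnn n)
    rwa [hf0] at this
  refine ⟨hle, ?_, ?_⟩
  · -- equality → no cycle
    intro heq i hcyc
    obtain ⟨n, hn⟩ := transGen_to_pos W hW hcyc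
    have htrpos : 0 < (W ^ (n + 1)).trace := by
      have : (W ^ (n + 1)) i i ≤ (W ^ (n + 1)).trace := by
        rw [Matrix.trace]
        exact Finset.single_le_sum (fun k _ => pow_entry_nonneg W hW _ k k)
          (Finset.mem_univ i)
      linarith
    have hfpos : 0 < f (n + 1) := mul_pos (by positivity) htrpos
    have : f 0 + f (n + 1) ≤ (NormedSpace.exp W).trace := by
      have := sum_le_hasSum ({0, n + 1} : Finset ℕ)
        (fun m _ => hfnn m) htr
      rwa [Finset.sum_pair (by omega)] at this
    rw [heq, hf0] at this
    linarith
  · -- no cycle → equality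
    intro hnc
    have hz : ∀ n : ℕ, n ≠ 0 → f n = 0 := by
      intro n hn
      obtain ⟨m, rfl⟩ := Nat.exists_eq_succ_of_ne_zero hn
      have : (W ^ (m + 1)).trace = 0 := by
        rw [Matrix.trace]
        refine Finset.sum_eq_zero fun i _ => ?_
        by_contra hne
        have hpos : 0 < (W ^ (m + 1)) i i :=
          lt_of_le_of_ne (pow_entry_nonneg W hW _ i i) (Ne.symm hne)
        exact hnc i (pos_to_transGen W hW m i i hpos)
      simp [hf, this]
    have : (NormedSpace.exp W).trace = f 0 := by
      rw [← htr.tsum_eq]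
      exact tsum_eq_single 0 hz
    rw [this, hf0]
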